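/- Under the hypotheses of the semismooth Newton convergence theorem, if additionally Φ is β-order ∂Φ-semismooth at ū for some 0 < β ≤ 1 (i.e., sup_{M ∈ ∂Φ(ū+v)} ‖Φ(ū+v) − Φ(ū) − Mv‖_Y ≤ C_σ ‖v‖_X^{1+β} for ‖v‖_X < δ), then the Newton iterates satisfy ‖u_{j+1} − ū‖ ≤ C C_σ ‖u_j − ū‖^{1+β} for all j large, i.e., convergence is of order 1+β. -/

import Mathlib

open Filter

/-- Semismooth Newton iteration of order `1+β`: under the hypotheses of the
semismooth Newton convergence theorem, if moreover `Φ` is `β`-order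
`∂Φ`-semismooth at `ū`, then `‖u_{j+1} - ū‖ ≤ C C_σ ‖u_j - ū‖^{1+β}` for all
`j` large. -/
theorem stmt_10 {X Y : Type*} [NormedAddCommGroup X] [NormedSpace ℝ X]
    [CompleteSpace X] [NormedAddCommGroup Y] [NormedSpace ℝ Y]
    (V : Set X) (hV : IsOpen V) (Φ : X → Y) (hΦc : ContinuousOn Φ V)
    (DΦ : X → Set (X →L[ℝ] Y)) (hne : ∀ u ∈ V, (DΦ u).Nonempty)
    (ub : X) (hubV : ub ∈ V) (hzero : Φ ub = 0)
    (hloc : ∃ r > 0, ∀ u : X, ‖u - ub‖ < r → Φ u = 0 → u = ub)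
    (hss : ∀ ε > 0, ∃ δ > 0, ∀ v : X, ‖v‖ < δ →
      ∀ M ∈ DΦ (ub + v), ‖Φ (ub + v) - Φ ub - M v‖ ≤ ε * ‖v‖)
    (β : ℝ) (hβ0 : 0 < β) (hβ1 : β ≤ 1) (Cσ : ℝ) (hCσ : 0 < Cσ)
    (horder : ∃ δ > 0, ∀ v : X, ‖v‖ < δ →
      ∀ M ∈ DΦ (ub + v), ‖Φ (ub + v) - Φ ub - M v‖ ≤ Cσ * ‖v‖ ^ (1 + β))
    (C : ℝ) (hC : 0 < C)
    (hinv : ∃ ρ > 0, ∀ u : X, ‖u - ub‖ < ρ → ∀ M ∈ DΦ u,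
      ∃ N : Y →L[ℝ] X, ‖N‖ ≤ C ∧ (∀ x, N (M x) = x) ∧ (∀ y, M (N y) = y)) :
    ∃ δ > 0, ∀ (u : ℕ → X) (M : ℕ → X →L[ℝ] Y) (N : ℕ → Y →L[ℝ] X),
      ‖u 0 - ub‖ < δ →
      (∀ j, M j ∈ DΦ (u j)) →
      (∀ j, (∀ x, N j (M j x) = x) ∧ (∀ y, M j (N j y) = y)) →
      (∀ j, u (j + 1) = u j - N j (Φ (u j))) →
      ∃ j₀ : ℕ, ∀ j ≥ j₀, ‖u (j + 1) - ub‖ ≤ C * Cσ * ‖u j - ub‖ ^ (1 + β) := by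
  obtain ⟨δo, hδo, ho⟩ := horder
  obtain ⟨ρ, hρ, hinv'⟩ := hinv
  set s : ℝ := (2 * C * Cσ)⁻¹ ^ (1 / β) with hs_def
  have hCCσ : (0:ℝ) < 2 * C * Cσ := by positivity
  have hs : 0 < s := Real.rpow_pos_of_pos (by positivity) _
  refine ⟨min ρ (min δo s), by positivity, ?_⟩
  intro u M N h0 hM hN hstep
  -- the key one-step estimate
  have key : ∀ j, ‖u j - ub‖ < min ρ (min δo s) →
      ‖u (j + 1) - ub‖ ≤ C * Cσ * ‖u j - ub‖ ^ (1 + β) := by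
    intro j hj
    have huj : ub + (u j - ub) = u j := by abel
    have hvρ : ‖u j - ub‖ < ρ := lt_of_lt_of_le hj (min_le_left _ _)
    have hvδo : ‖u j - ub‖ < δo :=
      lt_of_lt_of_le hj ((min_le_right _ _).trans (min_le_left _ _))
    obtain ⟨N', hN'C, hN'l, hN'r⟩ := hinv' (u j) hvρ (M j) (hM j)
    have hNeq : ∀ y, N j y = N' y := by
      intro y
      calc N j y = N j (M j (N' y)) := by rw [hN'r y]
        _ = N' y := (hN j).1 _
    have hordj : ‖Φ (u j) - Φ ub - M j (u j - ub)‖ ≤ Cσ * ‖u j - ub‖ ^ (1 + β) := by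
      have h := ho (u j - ub) hvδo (M j) (by rw [huj]; exact hM j)
      rwa [huj] at h
    have hform : ‖u (j + 1) - ub‖ = ‖N' (Φ (u j) - Φ ub - M j (u j - ub))‖ := by
      have h1 : N' (Φ (u j) - Φ ub - M j (u j - ub)) = N' (Φ (u j)) - (u j - ub) := by
        rw [map_sub, map_sub, hzero, map_zero, hN'l]
        abel
      rw [h1, hstep j, hNeq,
        show u j - N' (Φ (u j)) - ub = -(N' (Φ (u j)) - (u j - ub)) by abel, norm_neg]
    rw [hform]
    calc ‖N' (Φ (u j) - Φ ub - M j (u j - ub))‖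
        ≤ ‖N'‖ * ‖Φ (u j) - Φ ub - M j (u j - ub)‖ := N'.le_opNorm _
      _ ≤ C * (Cσ * ‖u j - ub‖ ^ (1 + β)) :=
          mul_le_mul hN'C hordj (norm_nonneg _) hC.le
      _ = C * Cσ * ‖u j - ub‖ ^ (1 + β) := by ring
  -- contraction: the iterates stay in the ball
  have hsmall : ∀ j, ‖u j - ub‖ < min ρ (min δo s) := by
    intro j
    induction j with
    | zero => exact h0
    | succ j ih =>
      have hb := key j ih
      have hvs : ‖u j - ub‖ ≤ s := le_of_lt (lt_of_lt_of_le ih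
        ((min_le_right _ _).trans (min_le_right _ _)))
      have hpow : ‖u j - ub‖ ^ (1 + β) = ‖u j - ub‖ * ‖u j - ub‖ ^ β := by
        rw [Real.rpow_add' (norm_nonneg _) (by positivity), Real.rpow_one]
      have hβpow : ‖u j - ub‖ ^ β ≤ (2 * C * Cσ)⁻¹ := by
        have := Real.rpow_le_rpow (norm_nonneg _) hvs hβ0.le
        rwa [hs_def, ← Real.rpow_mul (by positivity),
          one_div, inv_mul_cancel₀ hβ0.ne', Real.rpow_one] at this
      have : C * Cσ * ‖u j - ub‖ ^ (1 + β) ≤ ‖u j - ub‖ / 2 := by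
        rw [hpow]
        have h1 : C * Cσ * (‖u j - ub‖ * ‖u j - ub‖ ^ β)
            ≤ C * Cσ * (‖u j - ub‖ * (2 * C * Cσ)⁻¹) := by
          apply mul_le_mul_of_nonneg_left _ (by positivity)
          exact mul_le_mul_of_nonneg_left hβpow (norm_nonneg _)
        have h2 : C * Cσ * (‖u j - ub‖ * (2 * C * Cσ)⁻¹) = ‖u j - ub‖ / 2 := by
          field_simp
        linarith
      calc ‖u (j + 1) - ub‖ ≤ ‖u j - ub‖ / 2 := le_trans hb this
        _ < min ρ (min δo s) := by
            have := norm_nonneg (u j - ub)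
            linarith [ih]
  exact ⟨0, fun j _ => key j (hsmall j)⟩
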